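/- Suppose the Laurent polynomial f = ∑_{i=−m}^{n} a_i X^i over L satisfies the annulus integrality conditions, that a_n ≠ 0 and a_{−m} ≠ 0, and that f has no root z ∈ L with |π| < |z| < 1. Then the ordinary polynomial P(X) = X^m · f(X) ∈ L[X] has degree m + n and P(0) ≠ 0, and among the m + n roots of P in L counted with multiplicity, exactly n satisfy |z| ≥ 1 and exactly m satisfy |z| ≤ |π|. -/

import Mathlib

open Polynomial

section aux
variable {L : Type*} [Field L] (v : AbsoluteValue L ℝ)

lemma vsum_le (s : Multiset L) (B : ℝ) (hB : 0 ≤ B)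
    (hna : ∀ x y : L, v (x + y) ≤ max (v x) (v y))
    (h : ∀ x ∈ s, v x ≤ B) : v s.sum ≤ B := by
  induction s using Multiset.induction with
  | empty => simpa using hB
  | cons a t ih =>
    rw [Multiset.sum_cons]
    exact (hna _ _).trans (max_le (h a (Multiset.mem_cons_self a t))
      (ih fun x hx => h x (Multiset.mem_cons_of_mem hx)))

lemma vadd_eq (hna : ∀ x y : L, v (x + y) ≤ max (v x) (v y)) {a b : L} (h : v b < v a) :
    v (a + b) = v a := by
  refine le_antisymm ((hna a b).trans (max_le le_rfl h.le)) ?_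
  have h2 : v a ≤ max (v (a + b)) (v b) := by
    have h3 := hna (a + b) (-b)
    rwa [add_neg_cancel_right, v.map_neg] at h3
  rcases max_cases (v (a + b)) (v b) with ⟨he, _⟩ | ⟨he, _⟩
  · rw [he] at h2; exact h2
  · rw [he] at h2; linarith

lemma one_le_rprod (s : Multiset ℝ) (h : ∀ x ∈ s, 1 ≤ x) : 1 ≤ s.prod := by
  induction s using Multiset.induction with
  | empty => simp
  | cons a t ih =>
    rw [Multiset.prod_cons]
    exact one_le_mul_of_one_le_of_one_le (h a (Multiset.mem_cons_self a t))
      (ih fun x hx => h x (Multiset.mem_cons_of_mem hx))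

lemma rprod_le_pow (s : Multiset ℝ) (c : ℝ) (hc : 0 ≤ c)
    (h : ∀ x ∈ s, 0 ≤ x ∧ x ≤ c) : s.prod ≤ c ^ Multiset.card s := by
  induction s using Multiset.induction with
  | empty => simp
  | cons a t ih =>
    rw [Multiset.prod_cons, Multiset.card_cons, pow_succ']
    have ha := h a (Multiset.mem_cons_self a t)
    have hprod0 : (0:ℝ) ≤ t.prod := Multiset.prod_nonneg fun x hx => (h x (Multiset.mem_cons_of_mem hx)).1
    exact mul_le_mul ha.2 (ih fun x hx => h x (Multiset.mem_cons_of_mem hx)) hprod0 hc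

lemma rprod_sub_le (s t : Multiset ℝ) (hts : t ≤ s) (h : ∀ x ∈ s, 1 ≤ x) : t.prod ≤ s.prod := by
  obtain ⟨u, rfl⟩ := Multiset.le_iff_exists_add.mp hts
  rw [Multiset.prod_add]
  have h1 : 1 ≤ t.prod := one_le_rprod t fun x hx => h x (Multiset.mem_add.mpr (Or.inl hx))
  have h2 : 1 ≤ u.prod := one_le_rprod u fun x hx => h x (Multiset.mem_add.mpr (Or.inr hx))
  nlinarith

lemma vprod_eq (s : Multiset L) : v s.prod = (s.map v).prod := by
  induction s using Multiset.induction with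
  | empty => simp
  | cons a t ih => simp [v.map_mul, ih]

lemma natDegree_prod_XC (s : Multiset L) :
    ((s.map fun z => X - C z).prod).natDegree = Multiset.card s := by
  rw [Polynomial.natDegree_multiset_prod_of_monic]
  · simp [Multiset.map_map, Function.comp]
  · intro f hf
    obtain ⟨z, _, rfl⟩ := Multiset.mem_map.mp hf
    exact monic_X_sub_C z

lemma monic_prod_XC (s : Multiset L) : ((s.map fun z => X - C z).prod).Monic :=
  Polynomial.monic_multiset_prod_of_monic s _ fun z _ => monic_X_sub_C z

end aux

section aux2
variable {L : Type*} [Field L] (v : AbsoluteValue L ℝ)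

lemma vfinsum_le {ι : Type*} (s : Finset ι) (f : ι → L) (B : ℝ) (hB : 0 ≤ B)
    (hna : ∀ x y : L, v (x + y) ≤ max (v x) (v y))
    (h : ∀ i ∈ s, v (f i) ≤ B) : v (∑ i ∈ s, f i) ≤ B := by
  classical
  induction s using Finset.induction with
  | empty => simpa using hB
  | insert _ _ hx ih =>
    rw [Finset.sum_insert hx]
    exact (hna _ _).trans (max_le (h _ (Finset.mem_insert_self _ _))
      (ih fun i hi => h i (Finset.mem_insert_of_mem hi)))

lemma coeff_big_le (hna : ∀ x y : L, v (x + y) ≤ max (v x) (v y)) (s : Multiset L) (h1 : ∀ x ∈ s, 1 ≤ v x) (k : ℕ) :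
    v (((s.map fun z => X - C z).prod).coeff k) ≤ (s.map v).prod := by
  have hmem : ∀ x ∈ s.map v, (1:ℝ) ≤ x := by
    intro x hx; obtain ⟨y, hy, rfl⟩ := Multiset.mem_map.mp hx; exact h1 y hy
  have hT : 1 ≤ (s.map v).prod := one_le_rprod _ hmem
  have hT0 : (0:ℝ) ≤ (s.map v).prod := zero_le_one.trans hT
  rcases le_or_gt k (Multiset.card s) with hk | hk
  · rw [Multiset.prod_X_sub_C_coeff s hk, v.map_mul, v.map_pow, v.map_neg, v.map_one,
      one_pow, one_mul, Multiset.esymm]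
    apply vsum_le v _ _ hT0 hna
    intro x hx
    obtain ⟨t, ht, rfl⟩ := Multiset.mem_map.mp hx
    obtain ⟨hts, _⟩ := Multiset.mem_powersetCard.mp ht
    rw [vprod_eq]
    exact rprod_sub_le _ _ (Multiset.map_le_map hts) hmem
  · rw [Polynomial.coeff_eq_zero_of_natDegree_lt (by rw [natDegree_prod_XC]; exact hk)]
    simpa using hT0

lemma coeff_small_le (hna : ∀ x y : L, v (x + y) ≤ max (v x) (v y)) (s : Multiset L) (c : ℝ) (hc0 : 0 ≤ c) (hc1 : c ≤ 1)
    (h1 : ∀ x ∈ s, v x ≤ c) (k : ℕ) :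
    v (((s.map fun z => X - C z).prod).coeff k) ≤ c ^ (Multiset.card s - k) := by
  rcases le_or_gt k (Multiset.card s) with hk | hk
  · rw [Multiset.prod_X_sub_C_coeff s hk, v.map_mul, v.map_pow, v.map_neg, v.map_one,
      one_pow, one_mul, Multiset.esymm]
    apply vsum_le v _ _ (pow_nonneg hc0 _) hna
    intro x hx
    obtain ⟨t, ht, rfl⟩ := Multiset.mem_map.mp hx
    obtain ⟨hts, hcard⟩ := Multiset.mem_powersetCard.mp ht
    rw [vprod_eq]
    have h2 := rprod_le_pow (t.map v) c hc0 (fun x hx => by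
      obtain ⟨y, hy, rfl⟩ := Multiset.mem_map.mp hx
      exact ⟨v.nonneg y, h1 y (Multiset.mem_of_le hts hy)⟩)
    rwa [Multiset.card_map, hcard] at h2
  · rw [Polynomial.coeff_eq_zero_of_natDegree_lt (by rw [natDegree_prod_XC]; exact hk)]
    simpa using pow_nonneg hc0 _

lemma vcoeff_zero_big (s : Multiset L) :
    v (((s.map fun z => X - C z).prod).coeff 0) = (s.map v).prod := by
  rw [Polynomial.coeff_zero_eq_eval_zero, Polynomial.eval_multiset_prod, Multiset.map_map,
    vprod_eq, Multiset.map_map]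
  congr 1
  apply Multiset.map_congr rfl
  intro x _
  simp [v.map_neg]

end aux2

section aux3
variable {L : Type*} [Field L] (v : AbsoluteValue L ℝ)

lemma coeff_mul_le (hna : ∀ x y : L, v (x + y) ≤ max (v x) (v y))
    (big small : Multiset L) (c : ℝ) (hc0 : 0 < c) (hc1 : c ≤ 1)
    (hbig : ∀ x ∈ big, 1 ≤ v x) (hsmall : ∀ x ∈ small, v x ≤ c) (k : ℕ) :
    v ((((big.map fun z => X - C z).prod) * ((small.map fun z => X - C z).prod)).coeff k)
      ≤ (big.map v).prod * c ^ (Multiset.card small - k) := by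
  have hT : 1 ≤ (big.map v).prod := one_le_rprod _ (by
    intro x hx; obtain ⟨y, hy, rfl⟩ := Multiset.mem_map.mp hx; exact hbig y hy)
  have hT0 : (0:ℝ) ≤ (big.map v).prod := zero_le_one.trans hT
  rw [Polynomial.coeff_mul]
  apply vfinsum_le v _ _ _ (mul_nonneg hT0 (pow_nonneg hc0.le _)) hna
  rintro ⟨i, j⟩ hij
  rw [Finset.HasAntidiagonal.mem_antidiagonal] at hij
  rw [v.map_mul]
  have h1 := coeff_big_le v hna big hbig i
  have h2 := coeff_small_le v hna small c hc0.le hc1 hsmall j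
  have h3 : c ^ (Multiset.card small - j) ≤ c ^ (Multiset.card small - k) :=
    pow_le_pow_of_le_one hc0.le hc1 (Nat.sub_le_sub_left (by omega) _)
  exact mul_le_mul (h1) (h2.trans h3) (v.nonneg _) hT0

lemma coeff_mul_beta (hna : ∀ x y : L, v (x + y) ≤ max (v x) (v y))
    (big small : Multiset L) (c : ℝ) (hc0 : 0 < c) (hc1 : c < 1)
    (hbig : ∀ x ∈ big, 1 ≤ v x) (hsmall : ∀ x ∈ small, v x ≤ c) :
    v ((((big.map fun z => X - C z).prod) * ((small.map fun z => X - C z).prod)).coeff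
        (Multiset.card small)) = (big.map v).prod := by
  classical
  set β := Multiset.card small with hβ
  set Pb := (big.map fun z => X - C z).prod with hPb
  set Ps := (small.map fun z => X - C z).prod with hPs
  have hT : 1 ≤ (big.map v).prod := one_le_rprod _ (by
    intro x hx; obtain ⟨y, hy, rfl⟩ := Multiset.mem_map.mp hx; exact hbig y hy)
  have hT0 : (0:ℝ) ≤ (big.map v).prod := zero_le_one.trans hT
  have hPsβ : Ps.coeff β = 1 := by
    have hm := monic_prod_XC small
    have := hm.coeff_natDegree
    rwa [natDegree_prod_XC] at this
  have hmain : v (Pb.coeff 0 * Ps.coeff β) = (big.map v).prod := by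
    rw [hPsβ, mul_one, hPb, vcoeff_zero_big]
  rw [Polynomial.coeff_mul]
  have hmem : ((0:ℕ), β) ∈ Finset.HasAntidiagonal.antidiagonal β := by simp
  rw [← Finset.add_sum_erase _ _ hmem]
  have hrest : v (∑ x ∈ (Finset.HasAntidiagonal.antidiagonal β).erase (0, β), Pb.coeff x.1 * Ps.coeff x.2)
      ≤ (big.map v).prod * c := by
    apply vfinsum_le v _ _ _ (mul_nonneg hT0 hc0.le) hna
    rintro ⟨i, j⟩ hij
    rw [Finset.mem_erase, Finset.HasAntidiagonal.mem_antidiagonal] at hij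
    obtain ⟨hne, hsum⟩ := hij
    have hjβ : j < β := by
      rcases lt_or_eq_of_le (show j ≤ β by omega) with h | h
      · exact h
      · exact absurd (by simp [← h]; omega : (i, j) = ((0:ℕ), β)) hne
    rw [v.map_mul]
    have h1 := coeff_big_le v hna big hbig i
    have h2 := coeff_small_le v hna small c hc0.le hc1.le hsmall j
    have h3 : c ^ (β - j) ≤ c ^ 1 := pow_le_pow_of_le_one hc0.le hc1.le (by omega)
    rw [pow_one] at h3
    exact mul_le_mul h1 (h2.trans h3) (v.nonneg _) hT0
  have hlt : v (∑ x ∈ (Finset.HasAntidiagonal.antidiagonal β).erase (0, β), Pb.coeff x.1 * Ps.coeff x.2)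
      < v (Pb.coeff 0 * Ps.coeff β) := by
    rw [hmain]
    refine hrest.trans_lt ?_
    nlinarith
  rw [vadd_eq v hna hlt, hmain]

end aux3

open scoped Classical

/-- With `L`, `v`, `π` and the annulus integrality conditions as in Statement 0,
assume moreover `a_n ≠ 0` and `a_{-m} ≠ 0` and that `f` has no root `z` with
`|π| < |z| < 1`.  Then the ordinary polynomial `P(X) = X^m · f(X)` has degree
`m + n`, `P(0) ≠ 0`, and among its `m + n` roots in `L` counted with
multiplicity exactly `n` satisfy `|z| ≥ 1` and exactly `m` satisfy `|z| ≤ |π|`. -/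
theorem vologodsky_stmt_1
    {L : Type*} [Field L] [IsAlgClosed L]
    (v : AbsoluteValue L ℝ)
    (hna : ∀ x y : L, v (x + y) ≤ max (v x) (v y))
    (π : L) (hπ0 : 0 < v π) (hπ1 : v π < 1)
    (m n : ℕ) (a : ℤ → L)
    (hsupp : ∀ i : ℤ, (i < -(m : ℤ) ∨ (n : ℤ) < i) → a i = 0)
    (h_i : ∀ i : ℤ, -(m : ℤ) ≤ i → i ≤ (n : ℤ) → v (a i) ≤ min 1 (v π ^ (-i)))
    (h_ii : ∃ i : ℤ, 0 ≤ i ∧ i ≤ (n : ℤ) ∧ v (a i) = 1)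
    (h_iii : ∃ i : ℤ, -(m : ℤ) ≤ i ∧ i ≤ 0 ∧ v (a i) = v π ^ (-i))
    (han : a (n : ℤ) ≠ 0) (ham : a (-(m : ℤ)) ≠ 0)
    (hroot : ∀ z : L, z ≠ 0 →
      (∑ i ∈ Finset.Icc (-(m : ℤ)) (n : ℤ), a i * z ^ i) = 0 →
      ¬ (v π < v z ∧ v z < 1))
    (P : Polynomial L)
    (hP : P = ∑ j ∈ Finset.range (m + n + 1),
      Polynomial.C (a ((j : ℤ) - (m : ℤ))) * Polynomial.X ^ j) :
    P.natDegree = m + n ∧ P.eval 0 ≠ 0 ∧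
      Multiset.card P.roots = m + n ∧
      Multiset.card (P.roots.filter fun z => 1 ≤ v z) = n ∧
      Multiset.card (P.roots.filter fun z => v z ≤ v π) = m := by
  classical
  have hcoeff : ∀ k : ℕ, P.coeff k = if k ≤ m + n then a ((k : ℤ) - m) else 0 := by
    intro k
    rw [hP, Polynomial.finset_sum_coeff]
    simp only [Polynomial.coeff_C_mul, Polynomial.coeff_X_pow, mul_ite, mul_one, mul_zero]
    rw [Finset.sum_ite_eq (Finset.range (m + n + 1)) k fun j => a ((j : ℤ) - m)]
    simp [Nat.lt_succ_iff]
  have hdn : ((m + n : ℕ) : ℤ) - m = n := by push_cast; ring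
  have hcd : P.coeff (m + n) = a n := by rw [hcoeff, if_pos le_rfl, hdn]
  have hdegle : P.natDegree ≤ m + n :=
    Polynomial.natDegree_le_iff_coeff_eq_zero.mpr fun k hk => by
      rw [hcoeff, if_neg (by omega)]
  have hdeg : P.natDegree = m + n :=
    le_antisymm hdegle (Polynomial.le_natDegree_of_ne_zero (by rw [hcd]; exact han))
  have hP0 : P ≠ 0 := fun h => han (by rw [← hcd, h, Polynomial.coeff_zero])
  have heval0 : P.eval 0 = a (-(m : ℤ)) := by
    rw [← Polynomial.coeff_zero_eq_eval_zero, hcoeff 0, if_pos (by omega)]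
    congr 1
    push_cast
    ring
  have hsplits : Polynomial.Splits P := IsAlgClosed.splits P
  have hcard : Multiset.card P.roots = m + n := by
    have h := Polynomial.Splits.natDegree_eq_card_roots hsplits
    rw [← h, hdeg]
  have hclass : ∀ z ∈ P.roots, z ≠ 0 ∧ (1 ≤ v z ∨ v z ≤ v π) := by
    intro z hz
    have hz0 : P.eval z = 0 := (Polynomial.mem_roots'.mp hz).2
    have hzne : z ≠ 0 := by
      rintro rfl
      exact ham (heval0 ▸ hz0)
    refine ⟨hzne, ?_⟩
    have hIcc : Finset.Icc (-(m : ℤ)) (n : ℤ) =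
        Finset.map ⟨fun j : ℕ => (j : ℤ) - m, show Function.Injective (fun j : ℕ => (j : ℤ) - m) from by intro x y h; simp only [sub_left_inj, Nat.cast_inj] at h; exact h⟩
          (Finset.range (m + n + 1)) := by
      ext i
      simp only [Finset.mem_Icc, Finset.mem_map, Finset.mem_range, Function.Embedding.coeFn_mk]
      constructor
      · intro h
        exact ⟨(i + m).toNat, by omega, by omega⟩
      · rintro ⟨j, hj, rfl⟩
        omega
    have hevalz : P.eval z = ∑ j ∈ Finset.range (m + n + 1), a ((j : ℤ) - m) * z ^ j := by
      rw [hP, Polynomial.eval_finset_sum]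
      simp
    have hsum : (∑ i ∈ Finset.Icc (-(m : ℤ)) (n : ℤ), a i * z ^ i) = 0 := by
      rw [hIcc, Finset.sum_map]
      simp only [Function.Embedding.coeFn_mk]
      have hterm : ∀ j ∈ Finset.range (m + n + 1),
          a ((j : ℤ) - m) * z ^ ((j : ℤ) - m) = a ((j : ℤ) - m) * z ^ j * ((z ^ m : L))⁻¹ := by
        intro j _
        rw [zpow_sub₀ hzne, zpow_natCast, zpow_natCast, div_eq_mul_inv]
        ring
      rw [Finset.sum_congr rfl hterm, ← Finset.sum_mul, ← hevalz, hz0, zero_mul]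
    have hno := hroot z hzne hsum
    by_contra hcon
    push_neg at hcon
    exact hno ⟨hcon.2, hcon.1⟩
  set S := P.roots with hS
  set big := S.filter (fun z => 1 ≤ v z) with hbigdef
  set small := S.filter (fun z => v z ≤ v π) with hsmalldef
  have hsplit : big + small = S := by
    rw [hbigdef, hsmalldef]
    have heqf : S.filter (fun z => v z ≤ v π) = S.filter (fun z => ¬ 1 ≤ v z) := by
      apply Multiset.filter_congr
      intro z hz
      constructor
      · intro h
        exact fun h1 => absurd (h1.trans h) (not_le.mpr hπ1)
      · intro h
        exact ((hclass z hz).2).resolve_left h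
    rw [heqf]
    exact Multiset.filter_add_not _ _
  have hbigmem : ∀ x ∈ big, 1 ≤ v x := fun x hx => (Multiset.mem_filter.mp hx).2
  have hsmallmem : ∀ x ∈ small, v x ≤ v π := fun x hx => (Multiset.mem_filter.mp hx).2
  set α := Multiset.card big with hα
  set β := Multiset.card small with hβ
  have hαβ : α + β = m + n := by
    have h := congrArg Multiset.card hsplit
    rw [Multiset.card_add] at h
    exact h.trans hcard
  have hlead : P.leadingCoeff = a n := by rw [Polynomial.leadingCoeff, hdeg, hcd]
  have hfact := Polynomial.C_leadingCoeff_mul_prod_multiset_X_sub_C (p := P)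
    (by rw [hcard, hdeg])
  set Pb := (big.map fun z => Polynomial.X - Polynomial.C z).prod with hPbdef
  set Ps := (small.map fun z => Polynomial.X - Polynomial.C z).prod with hPsdef
  have hPfact : P = Polynomial.C (a n) * (Pb * Ps) := by
    rw [← hfact, hlead]
    congr 1
    rw [← hS, ← hsplit, Multiset.map_add, Multiset.prod_add]
  have hvcoeff : ∀ k, v (P.coeff k) = v (a n) * v ((Pb * Ps).coeff k) := by
    intro k
    rw [hPfact, Polynomial.coeff_C_mul, v.map_mul]
  set T := (big.map v).prod with hTdef
  have hT1 : 1 ≤ T := one_le_rprod _ (by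
    intro x hx
    obtain ⟨y, hy, rfl⟩ := Multiset.mem_map.mp hx
    exact hbigmem y hy)
  set Q := v (a n) * T with hQdef
  have hQβ : v (P.coeff β) = Q := by
    rw [hvcoeff, coeff_mul_beta v hna big small (v π) hπ0 hπ1 hbigmem hsmallmem]
  have hQ0 : 0 ≤ Q := mul_nonneg (v.nonneg _) (zero_le_one.trans hT1)
  have hQle : ∀ k, v (P.coeff k) ≤ Q * (v π) ^ (β - k) := by
    intro k
    rw [hvcoeff]
    have h1 := coeff_mul_le v hna big small (v π) hπ0 hπ1.le hbigmem hsmallmem k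
    calc v (a n) * v ((Pb * Ps).coeff k)
        ≤ v (a n) * (T * (v π) ^ (β - k)) :=
          mul_le_mul_of_nonneg_left h1 (v.nonneg _)
      _ = Q * (v π) ^ (β - k) := by ring
  obtain ⟨i0, hi0a, hi0b, hi0v⟩ := h_ii
  have hQ1 : 1 ≤ Q := by
    set j1 := i0.toNat + m with hj1
    have hj1le : j1 ≤ m + n := by omega
    have hc : P.coeff j1 = a i0 := by
      rw [hcoeff, if_pos hj1le]
      congr 1
      omega
    have h2 := hQle j1
    rw [hc, hi0v] at h2
    have h3 : (v π) ^ (β - j1) ≤ 1 := pow_le_one₀ hπ0.le hπ1.le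
    nlinarith [pow_nonneg hπ0.le (β - j1)]
  rcases lt_trichotomy β m with hβm | hβm | hβm
  · exfalso
    have hβle : β ≤ m + n := by omega
    have hc : P.coeff β = a ((β : ℤ) - m) := by rw [hcoeff, if_pos hβle]
    have hia := h_i ((β : ℤ) - m) (by omega) (by omega)
    have hzpow : (v π) ^ (-(((β : ℤ)) - m)) = (v π) ^ ((m - β : ℕ)) := by
      rw [← zpow_natCast]
      congr 1
      omega
    rw [hzpow] at hia
    have h4 : v (a ((β : ℤ) - m)) ≤ (v π) ^ (m - β : ℕ) := hia.trans (min_le_right _ _)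
    have h5 : (v π) ^ (m - β : ℕ) ≤ v π := by
      have h6 := pow_le_pow_of_le_one hπ0.le hπ1.le (show 1 ≤ m - β by omega)
      rwa [pow_one] at h6
    have hQval : Q = v (a ((β : ℤ) - m)) := by rw [← hQβ, hc]
    rw [← hQval] at h4
    linarith
  · refine ⟨hdeg, by rw [heval0]; exact ham, hcard, ?_, ?_⟩
    · show α = n
      omega
    · show β = m
      exact hβm
  · exfalso
    obtain ⟨i2, hi2a, hi2b, hi2v⟩ := h_iii
    set j2 := (i2 + m).toNat with hj2
    have hj2m : j2 ≤ m := by omega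
    have hc2 : P.coeff j2 = a i2 := by
      rw [hcoeff, if_pos (by omega)]
      congr 1
      omega
    have hzpow : (v π) ^ (-i2) = (v π) ^ ((m - j2 : ℕ)) := by
      rw [← zpow_natCast]
      congr 1
      omega
    have h6 : (v π) ^ (m - j2 : ℕ) = v (P.coeff j2) := by rw [hc2, hi2v, hzpow]
    have h7 := hQle j2
    have hβle : β ≤ m + n := by omega
    have hcβ : P.coeff β = a ((β : ℤ) - m) := by rw [hcoeff, if_pos hβle]
    have h8 : Q ≤ 1 := by
      have h9 := (h_i ((β : ℤ) - m) (by omega) (by omega)).trans (min_le_left _ _)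
      calc Q = v (P.coeff β) := hQβ.symm
        _ = v (a ((β : ℤ) - m)) := by rw [hcβ]
        _ ≤ 1 := h9
    have hsplitpow : (v π) ^ (β - j2) = (v π) ^ (β - m) * (v π) ^ (m - j2) := by
      rw [← pow_add]
      congr 1
      omega
    have hpos : 0 < (v π) ^ (m - j2 : ℕ) := pow_pos hπ0 _
    have h10 : (v π) ^ (m - j2 : ℕ) ≤ (v π) ^ (β - m) * (v π) ^ (m - j2) := by
      calc (v π) ^ (m - j2 : ℕ) = v (P.coeff j2) := h6
        _ ≤ Q * ((v π) ^ (β - m) * (v π) ^ (m - j2)) := by rw [← hsplitpow]; exact h7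
        _ ≤ 1 * ((v π) ^ (β - m) * (v π) ^ (m - j2)) := by
            apply mul_le_mul_of_nonneg_right h8 (by positivity)
        _ = (v π) ^ (β - m) * (v π) ^ (m - j2) := one_mul _
    have h11 : (1 : ℝ) ≤ (v π) ^ (β - m) := (le_mul_iff_one_le_left hpos).mp h10
    have h12 : (v π) ^ (β - m) ≤ v π := by
      have h13 := pow_le_pow_of_le_one hπ0.le hπ1.le (show 1 ≤ β - m by omega)
      rwa [pow_one] at h13
    linarith
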